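/- Let C and D be categories and F, G, H : Cᵒᵖ × C ⥤ D functors. Let γ be a strong dinatural transformation from F to G and δ a strong dinatural transformation from G to H. Then the family of composites (γ_c ≫ δ_c), indexed by the objects c of C, is a strong dinatural transformation from F to H; hence strong dinatural transformations between functors Cᵒᵖ × C ⥤ D compose. -/
import Mathlib


open CategoryTheory

/-- A strong dinatural transformation between functors `Cᵒᵖ × C ⥤ D`: a family of components
`γ c : F.obj (c, c) ⟶ G.obj (c, c)` such that every wedge over `F` is carried to a
commuting hexagon. -/
def IsStrongDinatural {C : Type*} {D : Type*} [Category C] [Category D]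
    (F G : Cᵒᵖ × C ⥤ D)
    (γ : ∀ c : C, F.obj (Opposite.op c, c) ⟶ G.obj (Opposite.op c, c)) : Prop :=
  ∀ {c d : C} (f : c ⟶ d) (Q : D)
    (qc : Q ⟶ F.obj (Opposite.op c, c)) (qd : Q ⟶ F.obj (Opposite.op d, d)),
    qc ≫ F.map ((𝟙 (Opposite.op c), f) :
        (Opposite.op c, c) ⟶ (Opposite.op c, d)) =
      qd ≫ F.map ((f.op, 𝟙 d) : (Opposite.op d, d) ⟶ (Opposite.op c, d)) →
    qc ≫ γ c ≫ G.map ((𝟙 (Opposite.op c), f) :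
        (Opposite.op c, c) ⟶ (Opposite.op c, d)) =
      qd ≫ γ d ≫ G.map ((f.op, 𝟙 d) : (Opposite.op d, d) ⟶ (Opposite.op c, d))

/-- Strong dinatural transformations compose. -/
theorem IsStrongDinatural.comp {C : Type*} {D : Type*} [Category C] [Category D]
    (F G H : Cᵒᵖ × C ⥤ D)
    (γ : ∀ c : C, F.obj (Opposite.op c, c) ⟶ G.obj (Opposite.op c, c))
    (δ : ∀ c : C, G.obj (Opposite.op c, c) ⟶ H.obj (Opposite.op c, c))
    (hγ : IsStrongDinatural F G γ) (hδ : IsStrongDinatural G H δ) :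
    IsStrongDinatural F H (fun c => γ c ≫ δ c) := by
  intro c d f Q qc qd h
  have h1 := hγ f Q qc qd h
  have h2 := hδ f Q (qc ≫ γ c) (qd ≫ γ d) (by simpa using h1)
  simpa using h2
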